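/- Let n and d be positive integers with gcd(n, (2^d)!) = 1. Then there exists a set S of n^{d−1} points in (ℤ/nℤ)^d that is a configuration of pairwise nonattacking modular queens; that is, for all distinct p, q ∈ S, for every v ∈ {−1,0,1}^d \ {0} (reduced into (ℤ/nℤ)^d coordinatewise) and every integer t, one has q ≠ p + t·v. -/
import Mathlib


open scoped BigOperators

namespace WordGrid

variable {α : Type*}

/-- A valid word-search direction in dimension `d`: a nonzero vector with
entries in `{-1, 0, 1}`. -/
def IsDir (d : ℕ) (v : Fin d → ℤ) : Prop :=
  (∀ i, v i = -1 ∨ v i = 0 ∨ v i = 1) ∧ v ≠ 0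

/-- `(p, v)` is an appearance of the word `w` in the grid `Γ` of shape
`ZMod (n 0) × ⋯ × ZMod (n (d-1))`: reading from `p` in direction `v`
(reduced coordinatewise into the shape group) spells out `w`. -/
def Appears {d : ℕ} (n : Fin d → ℕ) (Γ : (∀ i, ZMod (n i)) → α) (w : List α)
    (p : ∀ i, ZMod (n i)) (v : Fin d → ℤ) : Prop :=
  IsDir d v ∧
    ∀ k : Fin w.length, Γ (fun j => p j + (((k : ℤ) * v j : ℤ) : ZMod (n j))) = w.get k

/-- The number of appearances of the word `w` in the grid `Γ`. -/
noncomputable def count {d : ℕ} (n : Fin d → ℕ) (Γ : (∀ i, ZMod (n i)) → α)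
    (w : List α) : ℕ :=
  Set.ncard {pv : (∀ i, ZMod (n i)) × (Fin d → ℤ) | Appears n Γ w pv.1 pv.2}

/-- The concentration of the word `w` in the grid `Γ`: the number of
appearances divided by the size of the grid. -/
noncomputable def conc {d : ℕ} (n : Fin d → ℕ) (Γ : (∀ i, ZMod (n i)) → α)
    (w : List α) : ℝ :=
  (count n Γ w : ℝ) / ((∏ i, n i : ℕ) : ℝ)

/-- `C d w`: the supremum of the concentration of `w` over all `d`-dimensional
grids (of all shapes with every side length positive). -/
noncomputable def C (d : ℕ) (w : List α) : ℝ :=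
  sSup {x : ℝ | ∃ (n : Fin d → ℕ) (Γ : (∀ i, ZMod (n i)) → α),
    (∀ i, 0 < n i) ∧ x = conc n Γ w}

/-- The word `w` contains at least two distinct letters. -/
def TwoLetters (w : List α) : Prop := ∃ x ∈ w, ∃ y ∈ w, x ≠ y



lemma sum_pm_two_pow_eq_zero : ∀ (m : ℕ) (ε : Fin m → ℤ),
    (∀ i, ε i = -1 ∨ ε i = 0 ∨ ε i = 1) → (∑ i, ε i * 2 ^ (i : ℕ)) = 0 → ε = 0 := by
  intro m
  induction m with
  | zero => intro ε _ _; funext i; exact absurd i.2 (by simp)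
  | succ m ih =>
    intro ε hε hsum
    rw [Fin.sum_univ_succ] at hsum
    simp only [Fin.val_zero, pow_zero, mul_one, Fin.val_succ] at hsum
    have h2 : (∑ i : Fin m, ε i.succ * 2 ^ ((i : ℕ) + 1)) =
        2 * ∑ i : Fin m, ε i.succ * 2 ^ (i : ℕ) := by
      rw [Finset.mul_sum]; apply Finset.sum_congr rfl; intro i _; ring
    rw [h2] at hsum
    have h0 : ε 0 = 0 := by rcases hε 0 with h | h | h <;> omega
    have htail : (∑ i : Fin m, ε i.succ * 2 ^ (i : ℕ)) = 0 := by omega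
    have := ih (fun i => ε i.succ) (fun i => hε i.succ) htail
    funext i
    refine Fin.cases ?_ ?_ i
    · exact h0
    · intro j; exact congrFun this j

lemma geom_two_int : ∀ d : ℕ, (∑ i ∈ Finset.range d, (2:ℤ)^i) = 2^d - 1 := by
  intro d
  induction d with
  | zero => simp
  | succ d ih => rw [Finset.sum_range_succ, ih]; ring

theorem statement10 (n d : ℕ) (hn : 0 < n) (hd : 0 < d)
    (hcop : Nat.Coprime n (Nat.factorial (2 ^ d))) :
    ∃ S : Finset (Fin d → ZMod n), S.card = n ^ (d - 1) ∧
      ∀ p ∈ S, ∀ q ∈ S, p ≠ q →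
        ∀ v : Fin d → ℤ, IsDir d v → ∀ t : ℤ,
          q ≠ fun j => p j + ((t * v j : ℤ) : ZMod n) := by
  haveI : NeZero n := ⟨hn.ne'⟩
  obtain ⟨d', rfl⟩ : ∃ d', d = d' + 1 := ⟨d - 1, (Nat.succ_pred_eq_of_pos hd).symm⟩
  -- the construction
  set F : (Fin d' → ZMod n) → (Fin (d' + 1) → ZMod n) :=
    fun y => Fin.cons (-∑ i : Fin d', (2 : ZMod n) ^ ((i : ℕ) + 1) * y i) y with hF
  have hFinj : Function.Injective F := by
    intro a b hab
    have := congrArg Fin.tail hab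
    simpa [hF, Fin.tail_cons] using this
  refine ⟨Finset.image F Finset.univ, ?_, ?_⟩
  · rw [Finset.card_image_of_injective _ hFinj, Finset.card_univ]
    simp [ZMod.card]
  · -- membership implies the linear relation
    have hker : ∀ p ∈ Finset.image F Finset.univ,
        (∑ i : Fin (d' + 1), (2 : ZMod n) ^ (i : ℕ) * p i) = 0 := by
      intro p hp
      obtain ⟨y, _, rfl⟩ := Finset.mem_image.mp hp
      rw [Fin.sum_univ_succ]
      simp [hF, Fin.val_succ]
    intro p hp q hq hpq v hv t hqe
    apply hpq
    -- key integer
    set s : ℤ := ∑ j : Fin (d' + 1), v j * 2 ^ (j : ℕ) with hs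
    have hs0 : s ≠ 0 := by
      intro h
      exact hv.2 (sum_pm_two_pow_eq_zero _ v hv.1 (hs ▸ h))
    have hsle : s.natAbs ≤ 2 ^ (d' + 1) := by
      have h1 : |s| ≤ 2 ^ (d' + 1) := by
        calc |s| ≤ ∑ j : Fin (d' + 1), |v j * 2 ^ (j : ℕ)| :=
              Finset.abs_sum_le_sum_abs _ _
          _ ≤ ∑ j : Fin (d' + 1), (2:ℤ) ^ (j : ℕ) := by
              apply Finset.sum_le_sum
              intro j _
              rw [abs_mul, abs_pow]
              rcases hv.1 j with h | h | h <;> simp [h]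
          _ = 2 ^ (d' + 1) - 1 := by
              rw [Fin.sum_univ_eq_sum_range (fun i => (2:ℤ)^i)]
              exact geom_two_int _
          _ ≤ 2 ^ (d' + 1) := by omega
      have h2 : (s.natAbs : ℤ) ≤ 2 ^ (d' + 1) := by
        rw [← Int.abs_eq_natAbs]; exact h1
      exact_mod_cast h2
    have hcops : Nat.Coprime n s.natAbs :=
      hcop.coprime_dvd_right (Nat.dvd_factorial (Int.natAbs_pos.mpr hs0) hsle)
    -- the sums vanish
    have hP := hker p hp
    have hQ := hker q hq
    have hQ' : (∑ i : Fin (d' + 1), (2 : ZMod n) ^ (i : ℕ) * q i) =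
        (∑ i : Fin (d' + 1), (2 : ZMod n) ^ (i : ℕ) * p i) + ((t * s : ℤ) : ZMod n) := by
      rw [hqe]
      have : ((t * s : ℤ) : ZMod n) =
          ∑ i : Fin (d' + 1), (2 : ZMod n) ^ (i : ℕ) * ((t * v i : ℤ) : ZMod n) := by
        rw [hs]
        push_cast [Finset.mul_sum]
        apply Finset.sum_congr rfl
        intro i _
        ring
      rw [this, ← Finset.sum_add_distrib]
      apply Finset.sum_congr rfl
      intro i _
      ring
    rw [hP, hQ] at hQ'
    have hdvd : (n : ℤ) ∣ t * s := by
      have h0 : ((t * s : ℤ) : ZMod n) = 0 := by simpa using hQ'.symm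
      exact (ZMod.intCast_zmod_eq_zero_iff_dvd _ n).mp h0
    have hdvdt : (n : ℤ) ∣ t := by
      have h1 : n ∣ (t * s).natAbs := Int.natCast_dvd.mp hdvd
      rw [Int.natAbs_mul] at h1
      exact Int.natCast_dvd.mpr (hcops.dvd_of_dvd_mul_right h1)
    have ht0 : ((t : ℤ) : ZMod n) = 0 := (ZMod.intCast_zmod_eq_zero_iff_dvd t n).mpr hdvdt
    funext j
    rw [hqe]
    push_cast
    rw [ht0]
    ring

end WordGrid
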